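/- Let n, m, k be natural numbers with 1 ≤ m ≤ n. Under the uniform probability measure on the finite type of functions f : Fin k → {S : Finset (Fin n) | S.card = m}, the expected value of the random variable f ↦ (⋃_{i} f(i)).card equals ∑_{t=m}^{min(km,n)} t · C(n,t) · (∑_{i=0}^{t-m} (-1)^i · C(t,i) · C(t-i,m)^k) / C(n,m)^k. Equivalently, ∑_{f} (⋃_{i} f(i)).card = ∑_{t=m}^{min(km,n)} t · C(n,t) · ∑_{i=0}^{t-m} (-1)^i · C(t,i) · C(t-i,m)^k, where the left sum ranges over all such functions f. -/

import Mathlib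

open Finset

/-- Auxiliary: the number of `k`-tuples of `m`-subsets all contained in `S`. -/
lemma abide_cardA (n m k : ℕ) (S : Finset (Fin n)) :
    (Finset.univ.filter (fun f : Fin k → {A : Finset (Fin n) // A.card = m} =>
      ∀ i, (f i).1 ⊆ S)).card = (S.card.choose m) ^ k := by
  rw [← Fintype.card_subtype]
  have e : {f : Fin k → {A : Finset (Fin n) // A.card = m} // ∀ i, (f i).1 ⊆ S}
      ≃ (Fin k → {A : Finset (Fin n) // A ∈ S.powersetCard m}) :=
    { toFun := fun f i => ⟨(f.1 i).1, Finset.mem_powersetCard.2 ⟨f.2 i, (f.1 i).2⟩⟩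
      invFun := fun g => ⟨fun i => ⟨(g i).1, (Finset.mem_powersetCard.1 (g i).2).2⟩,
        fun i => (Finset.mem_powersetCard.1 (g i).2).1⟩
      left_inv := fun f => rfl
      right_inv := fun g => rfl }
  rw [Fintype.card_congr e, Fintype.card_fun, Fintype.card_coe, Finset.card_powersetCard,
    Fintype.card_fin]

lemma abide_negpow {c d : ℕ} (h : c ≤ d) : ((-1 : ℤ)) ^ (d - c) = (-1) ^ d * (-1) ^ c := by
  rw [← pow_add]
  have : d + c = (d - c) + 2 * c := by omega
  rw [this, pow_add, pow_mul]
  simp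

/-- Auxiliary Möbius-type inversion sum over a powerset. -/
lemma abide_inv {α : Type*} [DecidableEq α] (T V : Finset α) :
    (∑ S ∈ T.powerset, if V ⊆ S then ((-1:ℤ) ^ (T.card - S.card)) else 0)
      = if V = T then 1 else 0 := by
  by_cases hVT : V ⊆ T
  · rw [← Finset.sum_filter]
    have hb : ∑ S ∈ T.powerset.filter (fun S => V ⊆ S), ((-1:ℤ) ^ (T.card - S.card))
        = ∑ C ∈ (T \ V).powerset, ((-1:ℤ) ^ ((T \ V).card - C.card)) := by
      refine Finset.sum_nbij' (fun S => S \ V) (fun C => V ∪ C) ?_ ?_ ?_ ?_ ?_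
      · intro S hS
        rw [Finset.mem_filter, Finset.mem_powerset] at hS
        exact Finset.mem_powerset.2 (Finset.sdiff_subset_sdiff hS.1 le_rfl)
      · intro C hC
        rw [Finset.mem_powerset] at hC
        refine Finset.mem_filter.2 ⟨Finset.mem_powerset.2 (Finset.union_subset hVT
          (hC.trans Finset.sdiff_subset)), Finset.subset_union_left⟩
      · intro S hS
        rw [Finset.mem_filter] at hS
        exact Finset.union_sdiff_of_subset hS.2
      · intro C hC
        rw [Finset.mem_powerset] at hC
        exact Finset.union_sdiff_cancel_left (Finset.disjoint_left.2
          (fun a hav hac => (Finset.mem_sdiff.1 (hC hac)).2 hav))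
      · intro S hS
        rw [Finset.mem_filter, Finset.mem_powerset] at hS
        congr 1
        rw [Finset.card_sdiff_of_subset hVT, Finset.card_sdiff_of_subset hS.2]
        have h1 := Finset.card_le_card hS.1
        have h2 := Finset.card_le_card hS.2
        have h3 := Finset.card_le_card hVT
        omega
    rw [hb]
    have : ∀ C ∈ (T \ V).powerset, ((-1:ℤ) ^ ((T \ V).card - C.card))
        = (-1) ^ (T \ V).card * (-1) ^ C.card := fun C hC =>
      abide_negpow (Finset.card_le_card (Finset.mem_powerset.1 hC))
    rw [Finset.sum_congr rfl this, ← Finset.mul_sum, Finset.sum_powerset_neg_one_pow_card]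
    by_cases h : T \ V = ∅
    · have : V = T := le_antisymm hVT (Finset.sdiff_eq_empty_iff_subset.1 h)
      simp [h, this]
    · have : V ≠ T := by
        intro hv; exact h (by simp [hv])
      simp [h, this]
  · have : ∀ S ∈ T.powerset, (if V ⊆ S then ((-1:ℤ) ^ (T.card - S.card)) else 0) = 0 := by
      intro S hS
      rw [if_neg]
      intro hvs
      exact hVT (hvs.trans (Finset.mem_powerset.1 hS))
    rw [Finset.sum_congr rfl this, Finset.sum_const_zero, if_neg]
    intro h; exact hVT (h ▸ le_rfl)

/-- Auxiliary: inclusion-exclusion count of tuples with union exactly `T`. -/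
lemma abide_countB (n m k : ℕ) (T : Finset (Fin n)) :
    ((Finset.univ.filter (fun f : Fin k → {A : Finset (Fin n) // A.card = m} =>
        Finset.univ.biUnion (fun i => (f i).1) = T)).card : ℤ)
      = ∑ S ∈ T.powerset, (-1:ℤ) ^ (T.card - S.card) * ((S.card.choose m : ℤ)) ^ k := by
  have step1 : ∀ S : Finset (Fin n), ((S.card.choose m : ℤ)) ^ k
      = ∑ f : Fin k → {A : Finset (Fin n) // A.card = m},
          (if Finset.univ.biUnion (fun i => (f i).1) ⊆ S then (1:ℤ) else 0) := by
    intro S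
    rw [Finset.sum_boole]
    rw [show (Finset.univ.filter (fun f : Fin k → {A : Finset (Fin n) // A.card = m} =>
        Finset.univ.biUnion (fun i => (f i).1) ⊆ S))
      = (Finset.univ.filter (fun f : Fin k → {A : Finset (Fin n) // A.card = m} =>
        ∀ i, (f i).1 ⊆ S)) from Finset.filter_congr (fun f _ => by
          simp [Finset.biUnion_subset]), abide_cardA]
    push_cast
    ring
  calc ((Finset.univ.filter (fun f : Fin k → {A : Finset (Fin n) // A.card = m} =>
        Finset.univ.biUnion (fun i => (f i).1) = T)).card : ℤ)
      = ∑ f : Fin k → {A : Finset (Fin n) // A.card = m},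
          (if Finset.univ.biUnion (fun i => (f i).1) = T then (1:ℤ) else 0) := by
        rw [Finset.sum_boole]
    _ = ∑ f : Fin k → {A : Finset (Fin n) // A.card = m},
          ∑ S ∈ T.powerset, (if Finset.univ.biUnion (fun i => (f i).1) ⊆ S
            then ((-1:ℤ) ^ (T.card - S.card)) else 0) := by
        refine Finset.sum_congr rfl fun f _ => ?_
        rw [abide_inv]
    _ = ∑ S ∈ T.powerset, ∑ f : Fin k → {A : Finset (Fin n) // A.card = m},
          (if Finset.univ.biUnion (fun i => (f i).1) ⊆ S
            then ((-1:ℤ) ^ (T.card - S.card)) else 0) := Finset.sum_comm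
    _ = ∑ S ∈ T.powerset, (-1:ℤ) ^ (T.card - S.card) * ((S.card.choose m : ℤ)) ^ k := by
        refine Finset.sum_congr rfl fun S _ => ?_
        rw [step1, Finset.mul_sum]
        refine Finset.sum_congr rfl fun f _ => ?_
        split <;> simp

/-- Auxiliary: evaluation of the alternating powerset sum by cardinality. -/
lemma abide_sumC' {α : Type*} [DecidableEq α] (m k : ℕ) (T : Finset α) :
    (∑ S ∈ T.powerset, (-1:ℤ) ^ (T.card - S.card) * ((S.card.choose m : ℤ)) ^ k)
      = ∑ i ∈ Finset.range (T.card + 1),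
          (-1:ℤ) ^ i * (T.card.choose i : ℤ) * (((T.card - i).choose m : ℤ)) ^ k := by
  rw [Finset.sum_powerset_apply_card
    (fun j => (-1:ℤ) ^ (T.card - j) * ((j.choose m : ℤ)) ^ k)]
  rw [← Finset.sum_range_reflect]
  refine Finset.sum_congr rfl fun i hi => ?_
  rw [Finset.mem_range, Nat.lt_succ_iff] at hi
  have h1 : T.card + 1 - 1 - i = T.card - i := by omega
  have h2 : T.card - (T.card - i) = i := by omega
  rw [h1, h2, Nat.choose_symm hi, nsmul_eq_mul]
  ring

/-- Auxiliary: the main integer counting identity. -/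
lemma abide_main (n m k : ℕ) (hm : 1 ≤ m) (hmn : m ≤ n) :
    (∑ f : Fin k → {S : Finset (Fin n) // S.card = m},
        ((Finset.univ.biUnion fun i => (f i).1).card : ℤ))
      = ∑ t ∈ Finset.Icc m (min (k * m) n),
          (t : ℤ) * (n.choose t : ℤ) *
            ∑ i ∈ Finset.range (t - m + 1),
              (-1 : ℤ) ^ i * (t.choose i : ℤ) * ((t - i).choose m : ℤ) ^ k := by
  classical
  set F := Fin k → {S : Finset (Fin n) // S.card = m}
  set U : F → Finset (Fin n) := fun f => Finset.univ.biUnion fun i => (f i).1 with hU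
  have step1 : (∑ f : F, ((U f).card : ℤ))
      = ∑ T ∈ (Finset.univ : Finset (Fin n)).powerset,
          ((Finset.univ.filter (fun f : F => U f = T)).card : ℤ) * T.card := by
    rw [← Finset.sum_fiberwise_of_maps_to (g := U) (t := (Finset.univ : Finset (Fin n)).powerset)
      (fun f _ => Finset.mem_powerset.2 (Finset.subset_univ _))
      (fun f => ((U f).card : ℤ))]
    refine Finset.sum_congr rfl fun T _ => ?_
    rw [Finset.sum_congr rfl (fun f hf => by rw [(Finset.mem_filter.1 hf).2]),
      Finset.sum_const, nsmul_eq_mul]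
  have step2 : (∑ T ∈ (Finset.univ : Finset (Fin n)).powerset,
          ((Finset.univ.filter (fun f : F => U f = T)).card : ℤ) * T.card)
      = ∑ t ∈ Finset.range (n + 1), ∑ T ∈ Finset.powersetCard t (Finset.univ : Finset (Fin n)),
          ((Finset.univ.filter (fun f : F => U f = T)).card : ℤ) * T.card := by
    rw [← Finset.sum_fiberwise_of_maps_to (g := Finset.card) (t := Finset.range (n + 1))
      (fun T _ => Finset.mem_range.2 (Nat.lt_succ_of_le (by simpa using Finset.card_le_univ T)))]
    refine Finset.sum_congr rfl fun t _ => ?_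
    congr 1
    ext T
    simp [Finset.mem_powersetCard]
  rw [step1, step2]
  rw [← Finset.sum_subset (s₁ := Finset.Icc m (min (k * m) n)) (by
      intro t ht
      rw [Finset.mem_Icc] at ht
      rw [Finset.mem_range]
      omega) (by
      intro t ht hni
      rw [Finset.mem_range, Nat.lt_succ_iff] at ht
      refine Finset.sum_eq_zero fun T hT => ?_
      obtain ⟨-, hTc⟩ := Finset.mem_powersetCard.1 hT
      rcases Nat.eq_zero_or_pos t with h0 | h1
      · rw [hTc, h0]; simp
      · have hemp : Finset.univ.filter (fun f : F => U f = T) = ∅ := by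
          rw [Finset.filter_eq_empty_iff]
          intro f _
          intro hf
          have hle : T.card ≤ k * m := by
            rw [← hf, hU]
            calc (Finset.univ.biUnion fun i => ((f i : Finset (Fin n)))).card
                ≤ ∑ i : Fin k, ((f i : Finset (Fin n))).card := Finset.card_biUnion_le
              _ = k * m := by
                  rw [Finset.sum_congr rfl (fun i _ => (f i).2), Finset.sum_const]
                  simp [mul_comm]
          have hge : m ≤ T.card := by
            obtain ⟨a, ha⟩ := Finset.card_pos.1 (hTc ▸ h1)
            rw [← hf, hU] at ha
            obtain ⟨i, -, -⟩ := Finset.mem_biUnion.1 ha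
            have hsub := Finset.card_le_card (Finset.subset_biUnion_of_mem
              (fun i => ((f i : Finset (Fin n)))) (Finset.mem_univ i))
            rw [(f i).2] at hsub
            rw [← hf, hU]
            exact hsub
          rw [hTc] at hle hge
          rw [Finset.mem_Icc] at hni
          omega
        rw [hemp]
        simp)]
  refine Finset.sum_congr rfl fun t ht => ?_
  rw [Finset.mem_Icc] at ht
  have hk : k ≠ 0 := by
    rcases ht with ⟨h1, h2⟩
    rcases Nat.eq_zero_or_pos k with rfl | h
    · omega
    · omega
  have hcount : ∀ T ∈ Finset.powersetCard t (Finset.univ : Finset (Fin n)),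
      ((Finset.univ.filter (fun f : F => U f = T)).card : ℤ) * T.card
        = (∑ i ∈ Finset.range (t - m + 1),
            (-1 : ℤ) ^ i * (t.choose i : ℤ) * ((t - i).choose m : ℤ) ^ k) * t := by
    intro T hT
    obtain ⟨-, hTc⟩ := Finset.mem_powersetCard.1 hT
    rw [abide_countB, abide_sumC', hTc]
    congr 1
    rw [← Finset.sum_subset (s₁ := Finset.range (t - m + 1))
      (Finset.range_subset_range.2 (by omega))]
    intro i hi hni
    rw [Finset.mem_range, Nat.lt_succ_iff] at hi
    rw [Finset.mem_range, Nat.not_lt] at hni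
    have : (t - i).choose m = 0 := Nat.choose_eq_zero_of_lt (by omega)
    rw [this]
    push_cast
    rw [zero_pow hk]
    ring
  rw [Finset.sum_congr rfl hcount, Finset.sum_const, Finset.card_powersetCard,
    Finset.card_univ, Fintype.card_fin, nsmul_eq_mul]
  ring

/-- The mean union size for `k` uniformly random `m`-element subsets of an
`n`-element set: the expectation of `f ↦ |⋃ i, f i|` under the uniform measure
equals `∑_{t=m}^{min(km,n)} t · C(n,t) · (∑_{i=0}^{t-m} (-1)^i C(t,i) C(t-i,m)^k) / C(n,m)^k`;
equivalently, the sum of `|⋃ i, f i|` over all `f` equals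
`∑_{t=m}^{min(km,n)} t · C(n,t) · ∑_{i=0}^{t-m} (-1)^i C(t,i) C(t-i,m)^k`.
(The `Nonempty` instance hypothesis is automatic from `1 ≤ m ≤ n`.) -/
theorem stmt_3 (n m k : ℕ) [Nonempty {S : Finset (Fin n) // S.card = m}]
    (hm : 1 ≤ m) (hmn : m ≤ n) :
    (∫ f, (((Finset.univ.biUnion fun i => (f i).1).card : ℝ))
        ∂(@PMF.toMeasure _ ⊤
          (PMF.uniformOfFintype (Fin k → {S : Finset (Fin n) // S.card = m})))
      = ∑ t ∈ Finset.Icc m (min (k * m) n),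
          (t : ℝ) * (n.choose t : ℝ) *
            (∑ i ∈ Finset.range (t - m + 1),
              (-1 : ℝ) ^ i * (t.choose i : ℝ) * ((t - i).choose m : ℝ) ^ k) /
            (n.choose m : ℝ) ^ k)
    ∧ (∑ f : Fin k → {S : Finset (Fin n) // S.card = m},
          ((Finset.univ.biUnion fun i => (f i).1).card : ℤ)
      = ∑ t ∈ Finset.Icc m (min (k * m) n),
          (t : ℤ) * (n.choose t : ℤ) *
            ∑ i ∈ Finset.range (t - m + 1),
              (-1 : ℤ) ^ i * (t.choose i : ℤ) * ((t - i).choose m : ℤ) ^ k) := by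
  classical
  have hint := abide_main n m k hm hmn
  refine ⟨?_, hint⟩
  set X := Fin k → {S : Finset (Fin n) // S.card = m} with hX
  letI : MeasurableSpace X := ⊤
  haveI : MeasurableSingletonClass X := ⟨fun _ => MeasurableSpace.measurableSet_top⟩
  rw [PMF.integral_eq_sum]
  have hcard : Fintype.card X = (n.choose m) ^ k := by
    rw [Fintype.card_fun, Fintype.card_finset_len, Fintype.card_fin, Fintype.card_fin]
  have h1 : ∀ a : X, ((PMF.uniformOfFintype X) a).toReal = ((n.choose m : ℝ) ^ k)⁻¹ := by
    intro a
    rw [PMF.uniformOfFintype_apply, ENNReal.toReal_inv, hcard]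
    push_cast
    rfl
  have h1' : ∀ a : Fin k → {S : Finset (Fin n) // S.card = m},
      ((PMF.uniformOfFintype (Fin k → {S : Finset (Fin n) // S.card = m})) a).toReal
        = ((n.choose m : ℝ) ^ k)⁻¹ := fun a => h1 a
  simp only [h1', smul_eq_mul]
  rw [← Finset.mul_sum]
  rw [show (∑ t ∈ Finset.Icc m (min (k * m) n),
          (t : ℝ) * (n.choose t : ℝ) *
            (∑ i ∈ Finset.range (t - m + 1),
              (-1 : ℝ) ^ i * (t.choose i : ℝ) * ((t - i).choose m : ℝ) ^ k) /
            (n.choose m : ℝ) ^ k)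
      = (∑ t ∈ Finset.Icc m (min (k * m) n),
          (t : ℝ) * (n.choose t : ℝ) *
            (∑ i ∈ Finset.range (t - m + 1),
              (-1 : ℝ) ^ i * (t.choose i : ℝ) * ((t - i).choose m : ℝ) ^ k))
        / (n.choose m : ℝ) ^ k from (Finset.sum_div _ _ _).symm]
  rw [div_eq_inv_mul]
  congr 1
  exact_mod_cast hint
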